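/- arXiv:1609.00699 — 3 statements merged into one kernel-verified Lean document; each statement's English description precedes it below -/
import Mathlib

section
/- Let R_α be a minimal rotation of the d-dimensional torus T^d with rotation vector α, and let r, s be relatively prime positive integers. If η is a probability measure on T^d × T^d invariant and ergodic for R_α^r × R_α^s, then the stabilizer of η (the group of translations of T^d × T^d preserving η) equals the closed subgroup T_{r,s} = {(t_1, t_2) ∈ T^d × T^d : s·t_1 = r·t_2}. -/
open MeasureTheory Complex Set AddCircle

noncomputable section StabAux

namespace StabAux

variable {d : ℕ}

/-- character on the torus indexed by `k : Fin d → ℤ`. -/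
def eChar (k : Fin d → ℤ) : C((Fin d → AddCircle (1 : ℝ)), ℂ) where
  toFun x := ∏ i, fourier (k i) (x i)
  continuous_toFun := continuous_finset_prod _ fun i _ =>
    (fourier (k i)).continuous.comp (continuous_apply i)

lemma eChar_apply (k : Fin d → ℤ) (x) : eChar k x = ∏ i, fourier (k i) (x i) := rfl

lemma eChar_add_x (k : Fin d → ℤ) (x y) : eChar k (x + y) = eChar k x * eChar k y := by
  simp only [eChar_apply, ← Finset.prod_mul_distrib]
  refine Finset.prod_congr rfl fun i _ => ?_
  rw [Pi.add_apply, fourier_apply, fourier_apply, fourier_apply, zsmul_add, toCircle_add,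
    Circle.coe_mul]

lemma eChar_zero_x (k : Fin d → ℤ) : eChar k (0 : Fin d → AddCircle (1:ℝ)) = 1 := by
  simp [eChar_apply, fourier_eval_zero]

lemma eChar_zero_k (x : Fin d → AddCircle (1:ℝ)) : eChar (0 : Fin d → ℤ) x = 1 := by
  simp [eChar_apply, fourier_zero]

lemma eChar_add_k (k l : Fin d → ℤ) (x) : eChar (k + l) x = eChar k x * eChar l x := by
  simp only [eChar_apply, ← Finset.prod_mul_distrib]
  exact Finset.prod_congr rfl fun i _ => by rw [Pi.add_apply, fourier_add]

lemma eChar_smul_comm (n : ℤ) (k : Fin d → ℤ) (x) : eChar (n • k) x = eChar k (n • x) := by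
  simp only [eChar_apply]
  refine Finset.prod_congr rfl fun i _ => ?_
  rw [Pi.smul_apply, Pi.smul_apply, fourier_apply, fourier_apply, smul_eq_mul, mul_comm, mul_smul]

lemma eChar_neg_x (k : Fin d → ℤ) (x) : eChar k (-x) = (eChar k x)⁻¹ := by
  exact eq_inv_of_mul_eq_one_left (by rw [← eChar_add_x, neg_add_cancel, eChar_zero_x])

lemma norm_eChar (k : Fin d → ℤ) (x) : ‖eChar k x‖ = 1 := by
  rw [eChar_apply, norm_prod]
  refine Finset.prod_eq_one fun i _ => ?_
  rw [fourier_apply, Circle.norm_coe]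

lemma eChar_ne_zero (k : Fin d → ℤ) (x) : eChar k x ≠ 0 := by
  intro h
  have := norm_eChar k x
  rw [h, norm_zero] at this
  norm_num at this

lemma conj_eChar (k : Fin d → ℤ) (x) :
    (starRingEnd ℂ) (eChar k x) = eChar (-k) x := by
  rw [eChar_apply, eChar_apply, map_prod]
  exact (Finset.prod_congr rfl fun i _ => by rw [Pi.neg_apply, fourier_neg]).symm

lemma eChar_single_x (k : Fin d → ℤ) (i : Fin d) (t : AddCircle (1:ℝ)) :
    eChar k (Pi.single i t) = fourier (k i) t := by
  rw [eChar_apply, Finset.prod_eq_single i (fun j _ hj => by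
    rw [Pi.single_eq_of_ne hj, fourier_eval_zero]) (by simp), Pi.single_eq_same]

lemma eChar_single_k (i : Fin d) (m : ℤ) (x) :
    eChar (Pi.single i m) x = fourier m (x i) := by
  rw [eChar_apply, Finset.prod_eq_single i (fun j _ hj => by
    rw [Pi.single_eq_of_ne hj, fourier_zero]) (by simp), Pi.single_eq_same]

lemma k_eq_zero_of_eChar_eq_one {k : Fin d → ℤ} (h : ∀ x, eChar k x = 1) : k = 0 := by
  funext i
  by_contra hne
  have h1 := h (Pi.single i (((1:ℝ) / 2 / (k i : ℝ) : ℝ) : AddCircle (1:ℝ)))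
  rw [eChar_single_x] at h1
  have h2 := fourier_add_half_inv_index (T := 1) hne one_pos (0 : AddCircle (1:ℝ))
  rw [zero_add, fourier_eval_zero] at h2
  rw [h2] at h1
  norm_num at h1

lemma x_eq_zero_of_eChar_eq_one {x : Fin d → AddCircle (1:ℝ)}
    (h : ∀ k : Fin d → ℤ, eChar k x = 1) : x = 0 := by
  funext i
  have h1 := h (Pi.single i 1)
  rw [eChar_single_k] at h1
  have e1 : ((toCircle ((1:ℤ) • x i) : Circle) : ℂ) = 1 := by rw [← fourier_apply]; exact h1
  have e2 : ((toCircle ((1:ℤ) • (0 : AddCircle (1:ℝ))) : Circle) : ℂ) = 1 := by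
    rw [← fourier_apply]; exact fourier_eval_zero 1
  have e3 : toCircle ((1:ℤ) • x i) = toCircle ((1:ℤ) • (0 : AddCircle (1:ℝ))) :=
    Subtype.coe_injective (e1.trans e2.symm)
  have := injective_toCircle (one_ne_zero) e3
  simpa using this

lemma eChar_alpha_eq_one_iff {α : Fin d → AddCircle (1 : ℝ)}
    (hmin : ∀ x : Fin d → AddCircle (1 : ℝ), Dense (Set.range fun n : ℤ => x + n • α))
    {k : Fin d → ℤ} (h : eChar k α = 1) : k = 0 := by
  have hneg : eChar k (-α) = 1 := by rw [eChar_neg_x, h, inv_one]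
  have hz : ∀ n : ℤ, eChar k (n • α) = 1 := by
    intro n
    induction n using Int.induction_on with
    | zero => simpa using eChar_zero_x k
    | succ m ih => rw [add_smul, one_smul, eChar_add_x, ih, h, mul_one]
    | pred m ih => rw [sub_smul, one_smul, sub_eq_add_neg, eChar_add_x, ih, hneg, mul_one]
  apply k_eq_zero_of_eChar_eq_one
  intro x
  have hcl : IsClosed {y : Fin d → AddCircle (1:ℝ) | eChar k y = 1} :=
    isClosed_eq (eChar k).continuous continuous_const
  have hsub : Set.range (fun n : ℤ => (0 : Fin d → AddCircle (1:ℝ)) + n • α) ⊆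
      {y | eChar k y = 1} := by
    rintro - ⟨n, rfl⟩
    simpa using hz n
  have := (hmin 0).mono (subset_closure)
  have huniv : {y : Fin d → AddCircle (1:ℝ) | eChar k y = 1} = Set.univ := by
    apply Set.eq_univ_of_univ_subset
    rw [← (hmin 0).closure_eq]
    exact closure_minimal hsub hcl
  exact (Set.eq_univ_iff_forall.1 huniv) x

section pChar

abbrev XX (d : ℕ) := (Fin d → AddCircle (1 : ℝ)) × (Fin d → AddCircle (1 : ℝ))

instance : BorelSpace (XX d) := Prod.borelSpace

/-- character on the product torus. -/
def pChar (p : (Fin d → ℤ) × (Fin d → ℤ)) : C(XX d, ℂ) where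
  toFun z := eChar p.1 z.1 * eChar p.2 z.2
  continuous_toFun :=
    ((eChar p.1).continuous.comp continuous_fst).mul ((eChar p.2).continuous.comp continuous_snd)

lemma pChar_apply (p : (Fin d → ℤ) × (Fin d → ℤ)) (z : XX d) :
    pChar p z = eChar p.1 z.1 * eChar p.2 z.2 := rfl

lemma pChar_add_x (p : (Fin d → ℤ) × (Fin d → ℤ)) (z w : XX d) :
    pChar p (z + w) = pChar p z * pChar p w := by
  simp only [pChar_apply, Prod.fst_add, Prod.snd_add, eChar_add_x]
  ring

lemma pChar_add_k (p q : (Fin d → ℤ) × (Fin d → ℤ)) (z : XX d) :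
    pChar (p + q) z = pChar p z * pChar q z := by
  simp only [pChar_apply, Prod.fst_add, Prod.snd_add, eChar_add_k]
  ring

lemma pChar_zero_k (z : XX d) : pChar (0 : (Fin d → ℤ) × (Fin d → ℤ)) z = 1 := by
  simp [pChar_apply, eChar_zero_k]

lemma pChar_mul (p q : (Fin d → ℤ) × (Fin d → ℤ)) :
    pChar p * pChar q = pChar (p + q) := by
  ext z
  exact (pChar_add_k p q z).symm

lemma pChar_one : (pChar (0 : (Fin d → ℤ) × (Fin d → ℤ))) = 1 := by
  ext z; exact pChar_zero_k z

lemma star_pChar (p : (Fin d → ℤ) × (Fin d → ℤ)) : star (pChar p) = pChar (-p) := by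
  ext z
  show (starRingEnd ℂ) (pChar p z) = _
  rw [pChar_apply, map_mul, conj_eChar, conj_eChar, pChar_apply]
  rfl

lemma pChar_ne_zero (p : (Fin d → ℤ) × (Fin d → ℤ)) (z : XX d) : pChar p z ≠ 0 :=
  mul_ne_zero (eChar_ne_zero _ _) (eChar_ne_zero _ _)

lemma fourierOne_inj : Function.Injective (fun t : AddCircle (1:ℝ) => fourier 1 t) := by
  intro a b hab
  have e3 : toCircle ((1:ℤ) • a) = toCircle ((1:ℤ) • b) := by
    apply Subtype.coe_injective
    simp only [fourier_apply] at hab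
    exact hab
  have := injective_toCircle (one_ne_zero : (1:ℝ) ≠ 0) e3
  simpa using this

open Algebra in
/-- The star subalgebra generated by the product characters. -/
def pAlg (d : ℕ) : StarSubalgebra ℂ C(XX d, ℂ) where
  toSubalgebra := Algebra.adjoin ℂ (Set.range (pChar (d := d)))
  star_mem' := by
    show Algebra.adjoin ℂ (Set.range (pChar (d := d))) ≤
      star (Algebra.adjoin ℂ (Set.range (pChar (d := d))))
    refine adjoin_le ?_
    rintro - ⟨p, rfl⟩
    exact subset_adjoin ⟨-p, (star_pChar p).symm⟩

open Submodule in
lemma pAlg_coe (d : ℕ) : Subalgebra.toSubmodule (pAlg d).toSubalgebra =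
    span ℂ (Set.range (pChar (d := d))) := by
  apply Algebra.adjoin_eq_span_of_subset
  refine Set.Subset.trans ?_ Submodule.subset_span
  intro x hx
  refine Submonoid.closure_induction (fun _ => id) ⟨0, pChar_one⟩ ?_ hx
  rintro - - - - ⟨p, rfl⟩ ⟨q, rfl⟩
  exact ⟨p + q, (pChar_mul p q).symm⟩

lemma pAlg_separatesPoints (d : ℕ) : (pAlg d).SeparatesPoints := by
  intro z w hzw
  have : z.1 ≠ w.1 ∨ z.2 ≠ w.2 := by
    by_contra h
    push_neg at h
    exact hzw (Prod.ext h.1 h.2)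
  rcases this with h | h
  · obtain ⟨i, hi⟩ := Function.ne_iff.1 h
    refine ⟨_, ⟨pChar (Pi.single i 1, 0), Algebra.subset_adjoin ⟨(Pi.single i 1, 0), rfl⟩, rfl⟩, ?_⟩
    simp only [pChar_apply, eChar_single_k, eChar_zero_k, mul_one]
    exact fun hc => hi (fourierOne_inj hc)
  · obtain ⟨i, hi⟩ := Function.ne_iff.1 h
    refine ⟨_, ⟨pChar (0, Pi.single i 1), Algebra.subset_adjoin ⟨(0, Pi.single i 1), rfl⟩, rfl⟩, ?_⟩
    simp only [pChar_apply, eChar_single_k, eChar_zero_k, one_mul]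
    exact fun hc => hi (fourierOne_inj hc)

open Submodule in
lemma span_pChar_closure_eq_top (d : ℕ) :
    (span ℂ (Set.range (pChar (d := d)))).topologicalClosure = ⊤ := by
  rw [← pAlg_coe]
  exact congr_arg (Subalgebra.toSubmodule <| StarSubalgebra.toSubalgebra ·)
    (ContinuousMap.starSubalgebra_topologicalClosure_eq_top_of_separatesPoints (pAlg d)
      (pAlg_separatesPoints d))

end pChar

section MeasureExt

open scoped NNReal ENNReal
open Submodule

variable {d : ℕ}

lemma cm_integrable (F : C(XX d, ℂ)) (μ : Measure (XX d)) [IsFiniteMeasure μ] :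
    Integrable (fun z => F z) μ :=
  F.continuous.integrable_of_hasCompactSupport (HasCompactSupport.of_compactSpace _)

lemma norm_integral_le (F : C(XX d, ℂ)) (μ : Measure (XX d)) [IsProbabilityMeasure μ] :
    ‖∫ z, F z ∂μ‖ ≤ ‖F‖ := by
  have := BoundedContinuousFunction.norm_integral_le_norm (μ := μ) (BoundedContinuousFunction.mkOfCompact F)
  rwa [BoundedContinuousFunction.norm_mkOfCompact] at this

lemma ext_of_pChar_integral (μ ν : Measure (XX d)) [IsProbabilityMeasure μ]
    [IsProbabilityMeasure ν]
    (h : ∀ p : (Fin d → ℤ) × (Fin d → ℤ), ∫ z, pChar p z ∂μ = ∫ z, pChar p z ∂ν) : μ = ν := by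
  have key : ∀ F : C(XX d, ℂ), ∫ z, F z ∂μ = ∫ z, F z ∂ν := by
    let L : C(XX d, ℂ) →ₗ[ℂ] ℂ :=
      { toFun := fun F => (∫ z, F z ∂μ) - ∫ z, F z ∂ν
        map_add' := fun F G => by
          simp only [ContinuousMap.add_apply]
          rw [integral_add (cm_integrable F μ) (cm_integrable G μ),
            integral_add (cm_integrable F ν) (cm_integrable G ν)]
          ring
        map_smul' := fun c F => by
          simp only [ContinuousMap.smul_apply, smul_eq_mul, RingHom.id_apply]
          rw [integral_const_mul, integral_const_mul]
          ring }
    have hbound : ∀ F : C(XX d, ℂ), ‖L F‖ ≤ 2 * ‖F‖ := by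
      intro F
      have h1 := norm_integral_le F μ
      have h2 := norm_integral_le F ν
      calc ‖(∫ z, F z ∂μ) - ∫ z, F z ∂ν‖ ≤ ‖∫ z, F z ∂μ‖ + ‖∫ z, F z ∂ν‖ := norm_sub_le _ _
        _ ≤ 2 * ‖F‖ := by linarith
    let Lc : C(XX d, ℂ) →L[ℂ] ℂ := L.mkContinuous 2 hbound
    have hker : span ℂ (Set.range (pChar (d := d))) ≤ LinearMap.ker (Lc : C(XX d, ℂ) →ₗ[ℂ] ℂ) := by
      rw [span_le]
      rintro - ⟨p, rfl⟩
      simp only [SetLike.mem_coe, LinearMap.mem_ker]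
      show (∫ z, pChar p z ∂μ) - ∫ z, pChar p z ∂ν = 0
      rw [h p, sub_self]
    have hclosed : IsClosed ((LinearMap.ker (Lc : C(XX d, ℂ) →ₗ[ℂ] ℂ) : Submodule ℂ C(XX d, ℂ)) : Set C(XX d, ℂ)) :=
      ContinuousLinearMap.isClosed_ker Lc
    have htop : (⊤ : Submodule ℂ C(XX d, ℂ)) ≤ LinearMap.ker (Lc : C(XX d, ℂ) →ₗ[ℂ] ℂ) := by
      have h2 := Submodule.topologicalClosure_minimal _ hker hclosed
      rwa [span_pChar_closure_eq_top d] at h2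
    intro F
    have : Lc F = 0 := htop (mem_top) 
    have h0 : (∫ z, F z ∂μ) - ∫ z, F z ∂ν = 0 := this
    exact sub_eq_zero.mp h0
  apply ext_of_forall_lintegral_eq_of_IsFiniteMeasure
  intro f
  have hreal : (∫ z, ((f z : ℝ)) ∂μ) = ∫ z, ((f z : ℝ)) ∂ν := by
    have hc : Continuous fun z : XX d => ((f z : ℝ) : ℂ) :=
      Complex.continuous_ofReal.comp (NNReal.continuous_coe.comp f.continuous)
    have := key ⟨fun z => ((f z : ℝ) : ℂ), hc⟩
    simp only [ContinuousMap.coe_mk] at this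
    have e1 : ∫ z, (((f z : ℝ)) : ℂ) ∂μ = ((∫ z, ((f z : ℝ)) ∂μ : ℝ) : ℂ) :=
      integral_ofReal (𝕜 := ℂ) (f := fun z => ((f z) : ℝ))
    have e2 : ∫ z, (((f z : ℝ)) : ℂ) ∂ν = ((∫ z, ((f z : ℝ)) ∂ν : ℝ) : ℂ) :=
      integral_ofReal (𝕜 := ℂ) (f := fun z => ((f z) : ℝ))
    rw [e1, e2] at this
    exact_mod_cast this
  have h1 := BoundedContinuousFunction.toReal_lintegral_coe_eq_integral f μ
  have h2 := BoundedContinuousFunction.toReal_lintegral_coe_eq_integral f ν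
  have hfin1 : (∫⁻ x, (f x : ℝ≥0∞) ∂μ) ≠ ⊤ :=
    (BoundedContinuousFunction.lintegral_lt_top_of_nnreal μ f).ne
  have hfin2 : (∫⁻ x, (f x : ℝ≥0∞) ∂ν) ≠ ⊤ :=
    (BoundedContinuousFunction.lintegral_lt_top_of_nnreal ν f).ne
  rw [← ENNReal.toReal_eq_toReal_iff' hfin1 hfin2]
  rw [h1, h2, hreal]
  
end MeasureExt

section Main

variable {d : ℕ}

lemma norm_pChar (p : (Fin d → ℤ) × (Fin d → ℤ)) (z : XX d) : ‖pChar p z‖ = 1 := by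
  rw [pChar_apply, norm_mul, norm_eChar, norm_eChar, mul_one]

lemma integral_pChar_map (η : Measure (XX d)) [IsProbabilityMeasure η] (g : XX d)
    (p : (Fin d → ℤ) × (Fin d → ℤ)) :
    ∫ z, pChar p z ∂(Measure.map (fun z => z + g) η) = pChar p g * ∫ z, pChar p z ∂η := by
  rw [integral_map (continuous_add_right g).measurable.aemeasurable
    (pChar p).continuous.aestronglyMeasurable]
  calc ∫ z, pChar p (z + g) ∂η = ∫ z, pChar p g * pChar p z ∂η := by
        refine integral_congr_ae (Filter.Eventually.of_forall fun z => ?_)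
        show pChar p (z + g) = pChar p g * pChar p z
        rw [pChar_add_x, mul_comm]
    _ = pChar p g * ∫ z, pChar p z ∂η := integral_const_mul _ _

lemma pChar_comp_T (α : Fin d → AddCircle (1:ℝ)) (r s : ℕ)
    (p : (Fin d → ℤ) × (Fin d → ℤ)) (z : XX d) :
    pChar p (z.1 + r • α, z.2 + s • α) =
      eChar ((r:ℤ) • p.1 + (s:ℤ) • p.2) α * pChar p z := by
  have h1 : eChar p.1 (z.1 + r • α) = eChar p.1 z.1 * eChar ((r:ℤ) • p.1) α := by
    rw [eChar_add_x, eChar_smul_comm, natCast_zsmul]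
  have h2 : eChar p.2 (z.2 + s • α) = eChar p.2 z.2 * eChar ((s:ℤ) • p.2) α := by
    rw [eChar_add_x, eChar_smul_comm, natCast_zsmul]
  rw [pChar_apply, pChar_apply]
  show eChar p.1 (z.1 + r • α) * eChar p.2 (z.2 + s • α) = _
  rw [h1, h2, eChar_add_k]
  ring

lemma pChar_special (m' : Fin d → ℤ) (r s : ℕ) (g : XX d) :
    pChar ((s:ℤ) • m', -((r:ℤ) • m')) g = eChar m' ((s:ℤ) • g.1 + -((r:ℤ) • g.2)) := by
  have h1 : eChar ((s:ℤ) • m') g.1 = eChar m' ((s:ℤ) • g.1) := eChar_smul_comm _ _ _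
  have h2 : eChar (-((r:ℤ) • m')) g.2 = eChar m' (-((r:ℤ) • g.2)) := by
    rw [← neg_smul, eChar_smul_comm, neg_smul]
  rw [pChar_apply]
  show eChar ((s:ℤ) • m') g.1 * eChar (-((r:ℤ) • m')) g.2 = _
  rw [h1, h2, ← eChar_add_x]

lemma exists_of_q_eq_zero {r s : ℕ} (hs : 0 < s) (hrs : Nat.Coprime r s)
    {p : (Fin d → ℤ) × (Fin d → ℤ)}
    (hq : (r:ℤ) • p.1 + (s:ℤ) • p.2 = 0) :
    ∃ m' : Fin d → ℤ, p.1 = (s:ℤ) • m' ∧ p.2 = -((r:ℤ) • m') := by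
  have hco : IsCoprime (s:ℤ) (r:ℤ) := by
    rw [Int.isCoprime_iff_gcd_eq_one]
    simpa [Int.gcd_natCast_natCast] using hrs.symm
  have hs0 : (s:ℤ) ≠ 0 := by exact_mod_cast hs.ne'
  have hqi : ∀ i, (r:ℤ) * p.1 i + (s:ℤ) * p.2 i = 0 := by
    intro i
    have := congrFun hq i
    simpa [smul_eq_mul] using this
  refine ⟨fun i => p.1 i / (s:ℤ), funext fun i => ?_, funext fun i => ?_⟩
  · have hdvd : (s:ℤ) ∣ p.1 i :=
      hco.dvd_of_dvd_mul_left ⟨-p.2 i, by linarith [hqi i]⟩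
    simp only [Pi.smul_apply, smul_eq_mul]
    exact (Int.mul_ediv_cancel' hdvd).symm
  · have hdvd : (s:ℤ) ∣ p.1 i :=
      hco.dvd_of_dvd_mul_left ⟨-p.2 i, by linarith [hqi i]⟩
    have hm : p.1 i = (s:ℤ) * (p.1 i / (s:ℤ)) := (Int.mul_ediv_cancel' hdvd).symm
    simp only [Pi.neg_apply, Pi.smul_apply, smul_eq_mul]
    apply mul_left_cancel₀ hs0
    linear_combination hqi i - (r:ℤ) * hm

lemma integral_pChar_eq_zero {α : Fin d → AddCircle (1 : ℝ)}
    (hmin : ∀ x : Fin d → AddCircle (1 : ℝ), Dense (Set.range fun n : ℤ => x + n • α))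
    {r s : ℕ} {η : Measure (XX d)} [IsProbabilityMeasure η]
    (hmp : MeasurePreserving (fun z : XX d => (z.1 + r • α, z.2 + s • α)) η η)
    {p : (Fin d → ℤ) × (Fin d → ℤ)} (hq : (r:ℤ) • p.1 + (s:ℤ) • p.2 ≠ 0) :
    ∫ z, pChar p z ∂η = 0 := by
  set lam := eChar ((r:ℤ) • p.1 + (s:ℤ) • p.2) α with hlam
  have h1 : ∫ z, pChar p z ∂η = lam * ∫ z, pChar p z ∂η := by
    conv_lhs => rw [← hmp.map_eq]
    rw [integral_map hmp.measurable.aemeasurable (pChar p).continuous.aestronglyMeasurable]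
    calc ∫ z, pChar p ((fun z : XX d => (z.1 + r • α, z.2 + s • α)) z) ∂η
        = ∫ z, lam * pChar p z ∂η := by
          refine integral_congr_ae (Filter.Eventually.of_forall fun z => ?_)
          show pChar p (z.1 + r • α, z.2 + s • α) = lam * pChar p z
          rw [pChar_comp_T α r s p z]
      _ = lam * ∫ z, pChar p z ∂η := integral_const_mul _ _
  have h2 : (lam - 1) * ∫ z, pChar p z ∂η = 0 := by linear_combination -h1
  rcases mul_eq_zero.1 h2 with h | h
  · exact absurd (sub_eq_zero.1 h) (fun hc => hq (eChar_alpha_eq_one_iff hmin hc))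
  · exact h

end Main

end StabAux

end StabAux

open StabAux in
/-- If `R_α` is a minimal rotation of the torus `T^d` and `r, s` are relatively prime, then
the stabilizer of any `R_α^r × R_α^s`-invariant ergodic probability measure `η` on
`T^d × T^d` is the subgroup `{(t₁, t₂) : s•t₁ = r•t₂}`. -/
theorem stabilizer_of_ergodic_joining_of_powers {d : ℕ} (hd : 0 < d)
    (α : Fin d → AddCircle (1 : ℝ))
    (hmin : ∀ x : Fin d → AddCircle (1 : ℝ),
      Dense (Set.range fun n : ℤ => x + n • α))
    (r s : ℕ) (hr : 0 < r) (hs : 0 < s) (hrs : Nat.Coprime r s)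
    (η : Measure ((Fin d → AddCircle (1 : ℝ)) × (Fin d → AddCircle (1 : ℝ))))
    [IsProbabilityMeasure η]
    (herg : Ergodic (fun z : (Fin d → AddCircle (1 : ℝ)) × (Fin d → AddCircle (1 : ℝ)) =>
      (z.1 + r • α, z.2 + s • α)) η) :
    {g : (Fin d → AddCircle (1 : ℝ)) × (Fin d → AddCircle (1 : ℝ)) |
        Measure.map (fun z => z + g) η = η} =
      {g : (Fin d → AddCircle (1 : ℝ)) × (Fin d → AddCircle (1 : ℝ)) |
        s • g.1 = r • g.2} := by
  ext g
  simp only [Set.mem_setOf_eq]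
  constructor
  · intro hg
    have hy : ∀ m' : Fin d → ℤ, eChar m' ((s:ℤ) • g.1 + -((r:ℤ) • g.2)) = 1 := by
      intro m'
      set p : (Fin d → ℤ) × (Fin d → ℤ) := ((s:ℤ) • m', -((r:ℤ) • m')) with hp
      have hq0 : (r:ℤ) • p.1 + (s:ℤ) • p.2 = 0 := by
        show (r:ℤ) • ((s:ℤ) • m') + (s:ℤ) • -((r:ℤ) • m') = 0
        rw [smul_neg, smul_smul, smul_smul, mul_comm, add_neg_cancel]
      have hTp : ∀ z : XX d, pChar p (z.1 + r • α, z.2 + s • α) = pChar p z := by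
        intro z
        rw [pChar_comp_T α r s p z, hq0, eChar_zero_k, one_mul]
      obtain ⟨c, hc⟩ := herg.ae_eq_const_of_ae_eq_comp₀
        ((pChar p).continuous.measurable.nullMeasurable)
        (Filter.Eventually.of_forall fun z => hTp z)
      have hint : ∫ z, pChar p z ∂η = c := by
        rw [integral_congr_ae hc]
        simp
      haveI : (MeasureTheory.ae η).NeBot := ae_neBot.mpr (IsProbabilityMeasure.ne_zero η)
      obtain ⟨z0, hz0⟩ := hc.exists
      have hc0 : c ≠ 0 := by
        intro h
        have hn := norm_pChar p z0
        rw [show pChar p z0 = c from hz0, h, norm_zero] at hn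
        norm_num at hn
      have hmap := integral_pChar_map η g p
      rw [hg, hint] at hmap
      have h1 : pChar p g = 1 :=
        mul_right_cancel₀ hc0 (by rw [one_mul, ← hmap])
      rw [hp, pChar_special] at h1
      exact h1
    have hy0 := x_eq_zero_of_eChar_eq_one hy
    have h2 := add_neg_eq_zero.1 hy0
    rw [natCast_zsmul, natCast_zsmul] at h2
    exact h2
  · intro hg
    haveI : IsProbabilityMeasure (Measure.map (fun z => z + g) η) :=
      Measure.isProbabilityMeasure_map (continuous_add_right g).measurable.aemeasurable
    apply ext_of_pChar_integral
    intro p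
    rw [integral_pChar_map η g p]
    by_cases hq : (r:ℤ) • p.1 + (s:ℤ) • p.2 = 0
    · obtain ⟨m', h1, h2⟩ := exists_of_q_eq_zero hs hrs hq
      have hpg : pChar p g = 1 := by
        have hpe : p = ((s:ℤ) • m', -((r:ℤ) • m')) := Prod.ext h1 h2
        rw [hpe, pChar_special]
        have hyy : (s:ℤ) • g.1 + -((r:ℤ) • g.2) = 0 := by
          rw [natCast_zsmul, natCast_zsmul, hg, add_neg_cancel]
        rw [hyy, eChar_zero_x]
      rw [hpg, one_mul]
    · rw [integral_pChar_eq_zero hmin herg.toMeasurePreserving hq, mul_zero]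
end

section
/- Let G be an abelian lcsc group with no nontrivial torsion and H ≤ G a closed cocompact subgroup without nontrivial compact subgroups. Let p, q be coprime integers with ap + bq = 1, let s : G/H → G be a Borel selector with relatively compact image, θ(g, xH) = s(gxH)^{-1} g s(xH) ∈ H, and fix c ∈ G. For the cocycle θ^{(p,q)}(g, yH) = (θ(g^p, y^p H), θ(g^q, y^q c H)) with values in H × H, the composition with the automorphism J(h_1, h_2) = (h_1^q h_2^{-p}, h_1^a h_2^b) of H × H has first coordinate Ψ_1 taking values in a relatively compact subset of H, namely in (A^{-1}A)^{q-p} where A = s(G/H). -/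
open Pointwise

private lemma psi_aux_comm {G : Type*} [CommGroup G] (p q : ℤ) (x y x' y' g : G) :
    (x⁻¹ * g ^ p * y) ^ q * (x'⁻¹ * g ^ q * y') ^ (-p) =
      (x⁻¹ * y) ^ q * (x'⁻¹ * y') ^ (-p) := by
  calc (x⁻¹ * g ^ p * y) ^ q * (x'⁻¹ * g ^ q * y') ^ (-p)
      = (x⁻¹ * y) ^ q * (g ^ p) ^ q * ((x'⁻¹ * y') ^ (-p) * (g ^ q) ^ (-p)) := by
        rw [mul_right_comm x⁻¹ (g ^ p) y, mul_right_comm x'⁻¹ (g ^ q) y',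
          mul_zpow (x⁻¹ * y) (g ^ p) q, mul_zpow (x'⁻¹ * y') (g ^ q) (-p)]
    _ = (x⁻¹ * y) ^ q * (x'⁻¹ * y') ^ (-p) * ((g ^ p) ^ q * (g ^ q) ^ (-p)) := by
        rw [mul_mul_mul_comm]
    _ = (x⁻¹ * y) ^ q * (x'⁻¹ * y') ^ (-p) := by
        rw [← zpow_mul, ← zpow_mul, ← zpow_add, show p * q + q * -p = 0 by ring,
          zpow_zero, mul_one]

/-- The first coordinate `Ψ₁` of `J ∘ θ^{(p,q)}`, where `θ(g, xH) = s(gxH)⁻¹ g s(xH)` and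
`J(h₁,h₂) = (h₁^q h₂^{-p}, h₁^a h₂^b)`, lies in `H` and takes values in the relatively
compact set `(A⁻¹A)^q (A⁻¹A)^{-p}` where `A = s(G/H)`. -/
theorem psi_one_relatively_compact
    {G : Type*} [CommGroup G] [TopologicalSpace G] [IsTopologicalGroup G]
    [LocallyCompactSpace G] [SecondCountableTopology G]
    (htor : ∀ g : G, ∀ n : ℕ, 0 < n → g ^ n = 1 → g = 1)
    (H : Subgroup G) (hcl : IsClosed (H : Set G)) [CompactSpace (G ⧸ H)]
    (hnc : ∀ K : Subgroup G, K ≤ H → IsCompact (K : Set G) → K = ⊥)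
    (p q a b : ℤ) (hpq : IsCoprime p q) (hab : a * p + b * q = 1)
    (A : Set G) (hA : IsCompact (closure A))
    (s : G ⧸ H → G) (hsA : ∀ y, s y ∈ A)
    (hs : ∀ y : G ⧸ H, (QuotientGroup.mk (s y) : G ⧸ H) = y)
    (hse : s 1 = 1) (c : G) :
    (∀ (g : G) (y : G ⧸ H),
      ((s ((QuotientGroup.mk (g ^ p) : G ⧸ H) * y ^ p))⁻¹ * g ^ p * s (y ^ p)) ^ q *
          ((s ((QuotientGroup.mk (g ^ q) : G ⧸ H) *
                (y ^ q * QuotientGroup.mk c)))⁻¹ * g ^ q *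
              s (y ^ q * QuotientGroup.mk c)) ^ (-p) ∈ H ∧
      ∃ u v : G, u ∈ A⁻¹ * A ∧ v ∈ A⁻¹ * A ∧
        ((s ((QuotientGroup.mk (g ^ p) : G ⧸ H) * y ^ p))⁻¹ * g ^ p * s (y ^ p)) ^ q *
            ((s ((QuotientGroup.mk (g ^ q) : G ⧸ H) *
                  (y ^ q * QuotientGroup.mk c)))⁻¹ * g ^ q *
                s (y ^ q * QuotientGroup.mk c)) ^ (-p) = u ^ q * v ^ (-p)) ∧
    IsCompact (closure {z : G | ∃ u ∈ A⁻¹ * A, ∃ v ∈ A⁻¹ * A, z = u ^ q * v ^ (-p)}) := by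
  constructor
  · intro g y
    -- θ-values lie in H
    have hθ : ∀ (g' : G) (x : G ⧸ H),
        (s ((QuotientGroup.mk g' : G ⧸ H) * x))⁻¹ * g' * s x ∈ H := by
      intro g' x
      refine (QuotientGroup.eq_one_iff _).mp ?_
      have h1 := hs ((QuotientGroup.mk g' : G ⧸ H) * x)
      have h2 := hs x
      calc (QuotientGroup.mk ((s ((QuotientGroup.mk g' : G ⧸ H) * x))⁻¹ * g' * s x) : G ⧸ H)
          = ((QuotientGroup.mk g' : G ⧸ H) * x)⁻¹ * QuotientGroup.mk g' * x := by
            simp only [QuotientGroup.mk_mul, QuotientGroup.mk_inv, h1, h2]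
        _ = 1 := by group
    constructor
    · exact H.mul_mem (H.zpow_mem (hθ (g ^ p) (y ^ p)) q)
        (H.zpow_mem (hθ (g ^ q) (y ^ q * QuotientGroup.mk c)) (-p))
    · refine ⟨(s ((QuotientGroup.mk (g ^ p) : G ⧸ H) * y ^ p))⁻¹ * s (y ^ p),
        (s ((QuotientGroup.mk (g ^ q) : G ⧸ H) * (y ^ q * QuotientGroup.mk c)))⁻¹ *
          s (y ^ q * QuotientGroup.mk c), ?_, ?_, ?_⟩
      · exact Set.mul_mem_mul (Set.inv_mem_inv.mpr (hsA _)) (hsA _)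
      · exact Set.mul_mem_mul (Set.inv_mem_inv.mpr (hsA _)) (hsA _)
      · exact psi_aux_comm p q _ _ _ _ g
  · -- compactness
    set K : Set G := closure ((closure A)⁻¹ * closure A) with hK
    have hKc : IsCompact K := ((hA.inv.mul hA)).closure
    have hAA : A⁻¹ * A ⊆ K := by
      refine Set.Subset.trans ?_ subset_closure
      exact Set.mul_subset_mul (Set.inv_subset_inv.mpr subset_closure) subset_closure
    have hmap : Continuous fun z : G × G => z.1 ^ q * z.2 ^ (-p) := by
      exact ((continuous_fst.zpow q).mul (continuous_snd.zpow (-p)))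
    have himg : IsCompact ((fun z : G × G => z.1 ^ q * z.2 ^ (-p)) '' (K ×ˢ K)) :=
      (hKc.prod hKc).image hmap
    have hsub : {z : G | ∃ u ∈ A⁻¹ * A, ∃ v ∈ A⁻¹ * A, z = u ^ q * v ^ (-p)} ⊆
        (fun z : G × G => z.1 ^ q * z.2 ^ (-p)) '' (K ×ˢ K) := by
      rintro z ⟨u, hu, v, hv, rfl⟩
      exact ⟨(u, v), ⟨hAA hu, hAA hv⟩, rfl⟩
    exact himg.closure.of_isClosed_subset isClosed_closure
      (closure_mono hsub |>.trans (closure_minimal (fun x hx => subset_closure hx)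
        isClosed_closure))
end

section
/- Let G be a connected simply connected nilpotent Lie group of nilpotency class k with lattice Γ, and let r, s be relatively prime positive integers. Suppose h ⊆ g ⊕ g is a Lie subalgebra containing, for each i = 1,...,d₁, an element (r X'_i, s X''_i) with X'_i ≡ X''_i ≡ X_i mod g^(2), where X_1 + g^(2), ..., X_{d₁} + g^(2) is a basis of g/g^(2). Then h contains {(r^k Z, s^k Z) : Z ∈ g^(k)}. -/
/-- The product of two Lie rings, with componentwise bracket. -/
instance prodLieRing {L M : Type*} [LieRing L] [LieRing M] : LieRing (L × M) where
  bracket x y := (⁅x.1, y.1⁆, ⁅x.2, y.2⁆)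
  add_lie x y z := by
    refine Prod.ext ?_ ?_ <;> simp [add_lie]
  lie_add x y z := by
    refine Prod.ext ?_ ?_ <;> simp [lie_add]
  lie_self x := by
    refine Prod.ext ?_ ?_ <;> simp
  leibniz_lie x y z := by
    refine Prod.ext ?_ ?_
    · exact leibniz_lie x.1 y.1 z.1
    · exact leibniz_lie x.2 y.2 z.2

/-- The product of two Lie algebras. -/
instance prodLieAlgebra {R L M : Type*} [CommRing R] [LieRing L] [LieRing M]
    [LieAlgebra R L] [LieAlgebra R M] : LieAlgebra R (L × M) where
  lie_smul t x y := by
    refine Prod.ext ?_ ?_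
    · exact lie_smul t x.1 y.1
    · exact lie_smul t x.2 y.2

/-- Bracket of elements of terms of the lower central series lands deeper. -/
lemma aux_lcs_lie_lcs {L : Type*} [LieRing L] [LieAlgebra ℝ L] :
    ∀ (i j : ℕ) (a b : L), a ∈ LieModule.lowerCentralSeries ℝ L L i →
      b ∈ LieModule.lowerCentralSeries ℝ L L j →
      ⁅a, b⁆ ∈ LieModule.lowerCentralSeries ℝ L L (i + j + 1) := by
  intro i
  induction i with
  | zero =>
    intro j a b _ hb
    have : ⁅a, b⁆ ∈ LieModule.lowerCentralSeries ℝ L L (j + 1) := by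
      rw [LieModule.lowerCentralSeries_succ]
      exact LieSubmodule.lie_mem_lie (LieSubmodule.mem_top a) hb
    simpa using this
  | succ i ih =>
    intro j a b ha hb
    have ha2 : a ∈ ⁅(⊤ : LieIdeal ℝ L),
        (LieModule.lowerCentralSeries ℝ L L i : LieSubmodule ℝ L L)⁆ := by
      rw [← LieModule.lowerCentralSeries_succ]; exact ha
    have ha' : a ∈ Submodule.span ℝ
        {m | ∃ x ∈ (⊤ : LieIdeal ℝ L),
          ∃ n ∈ (LieModule.lowerCentralSeries ℝ L L i : LieSubmodule ℝ L L), ⁅x, n⁆ = m} := by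
      rw [← LieSubmodule.lieIdeal_oper_eq_linear_span']
      exact (LieSubmodule.mem_toSubmodule _).2 ha2
    have key : ∀ a ∈ Submodule.span ℝ
        {m | ∃ x ∈ (⊤ : LieIdeal ℝ L),
          ∃ n ∈ (LieModule.lowerCentralSeries ℝ L L i : LieSubmodule ℝ L L), ⁅x, n⁆ = m},
        ⁅a, b⁆ ∈ LieModule.lowerCentralSeries ℝ L L (i + 1 + j + 1) := by
      intro a ha'
      refine Submodule.span_induction ?_ ?_ ?_ ?_ ha'
      · rintro m ⟨x, -, n, hn, rfl⟩
        rw [lie_lie]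
        refine sub_mem ?_ ?_
        · have h1 : ⁅n, b⁆ ∈ LieModule.lowerCentralSeries ℝ L L (i + j + 1) := ih j n b hn hb
          have h2 : ⁅x, ⁅n, b⁆⁆ ∈ LieModule.lowerCentralSeries ℝ L L (i + j + 1 + 1) := by
            rw [LieModule.lowerCentralSeries_succ]
            exact LieSubmodule.lie_mem_lie (LieSubmodule.mem_top x) h1
          have : i + j + 1 + 1 = i + 1 + j + 1 := by omega
          rwa [this] at h2
        · have h1 : ⁅x, b⁆ ∈ LieModule.lowerCentralSeries ℝ L L (j + 1) := by
            have : ⁅x, b⁆ ∈ LieModule.lowerCentralSeries ℝ L L (j + 1) := by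
              rw [LieModule.lowerCentralSeries_succ]
              exact LieSubmodule.lie_mem_lie (LieSubmodule.mem_top x) hb
            exact this
          have h2 := ih (j + 1) n ⁅x, b⁆ hn h1
          have : i + (j + 1) + 1 = i + 1 + j + 1 := by omega
          rwa [this] at h2
      · simp
      · intro y z _ _ hy hz
        rw [add_lie]; exact add_mem hy hz
      · intro t y _ hy
        rw [smul_lie]; exact Submodule.smul_mem _ t hy
    exact key a ha'

/-- If `h ⊆ g ⊕ g` is a Lie subalgebra containing elements `(r X'_i, s X''_i)` with
`X'_i ≡ X''_i ≡ X_i mod g^(2)`, where the classes of `X_1, …, X_{d₁}` form a basis of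
`g/g^(2)`, and `g` is `k`-step nilpotent, then `h ⊇ {(r^k Z, s^k Z) : Z ∈ g^(k)}`. -/
theorem subalgebra_contains_scaled_diagonal
    {L : Type*} [LieRing L] [LieAlgebra ℝ L] [FiniteDimensional ℝ L]
    (k : ℕ) (hk : 1 ≤ k)
    (hne : LieModule.lowerCentralSeries ℝ L L (k - 1) ≠ ⊥)
    (hnil : LieModule.lowerCentralSeries ℝ L L k = ⊥)
    (r s : ℕ) (hr : 0 < r) (hs : 0 < s) (hrs : Nat.Coprime r s)
    {d₁ : ℕ} (X : Fin d₁ → L)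
    (hLI : LinearIndependent ℝ fun i : Fin d₁ =>
      Submodule.mkQ ((LieModule.lowerCentralSeries ℝ L L 1 : LieIdeal ℝ L) :
        Submodule ℝ L) (X i))
    (hspan : Submodule.span ℝ (Set.range fun i : Fin d₁ =>
      Submodule.mkQ ((LieModule.lowerCentralSeries ℝ L L 1 : LieIdeal ℝ L) :
        Submodule ℝ L) (X i)) = ⊤)
    (h : LieSubalgebra ℝ (L × L))
    (hY : ∀ i : Fin d₁, ∃ X' X'' : L,
      X' - X i ∈ ((LieModule.lowerCentralSeries ℝ L L 1 : LieIdeal ℝ L) : Submodule ℝ L) ∧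
      X'' - X i ∈ ((LieModule.lowerCentralSeries ℝ L L 1 : LieIdeal ℝ L) : Submodule ℝ L) ∧
      ((r : ℝ) • X', (s : ℝ) • X'') ∈ h) :
    ∀ Z ∈ LieModule.lowerCentralSeries ℝ L L (k - 1),
      (((r : ℝ) ^ k • Z, (s : ℝ) ^ k • Z) : L × L) ∈ h := by
  classical
  set Q : Submodule ℝ L :=
    ((LieModule.lowerCentralSeries ℝ L L 1 : LieIdeal ℝ L) : Submodule ℝ L) with hQ
  choose X' X'' hX'1 hX''1 hXh using hY
  -- base case : every element of L can be approximated
  have base : ∀ Z : L, ∃ Z' Z'' : L,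
      Z' - Z ∈ LieModule.lowerCentralSeries ℝ L L 1 ∧
      Z'' - Z ∈ LieModule.lowerCentralSeries ℝ L L 1 ∧
      ((r : ℝ) • Z', (s : ℝ) • Z'') ∈ h := by
    intro Z
    have hZ : Q.mkQ Z ∈ Submodule.span ℝ (Set.range fun i : Fin d₁ => Q.mkQ (X i)) := by
      rw [hspan]; trivial
    rw [Submodule.mem_span_range_iff_exists_fun] at hZ
    obtain ⟨c, hc⟩ := hZ
    refine ⟨∑ i, c i • X' i, ∑ i, c i • X'' i, ?_, ?_, ?_⟩
    · have hq : (∑ i, c i • X' i - Z) ∈ Q := by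
        rw [← Submodule.Quotient.mk_eq_zero, ← Submodule.mkQ_apply]
        rw [map_sub, map_sum]
        have : ∀ i, Q.mkQ (c i • X' i) = c i • Q.mkQ (X i) := by
          intro i
          rw [map_smul]
          congr 1
          have : Q.mkQ (X' i - X i) = 0 := (Submodule.Quotient.mk_eq_zero Q).2 (hX'1 i)
          rw [map_sub, sub_eq_zero] at this
          exact this
        rw [Finset.sum_congr rfl fun i _ => this i, hc, sub_self]
      exact hq
    · have hq : (∑ i, c i • X'' i - Z) ∈ Q := by
        rw [← Submodule.Quotient.mk_eq_zero, ← Submodule.mkQ_apply]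
        rw [map_sub, map_sum]
        have : ∀ i, Q.mkQ (c i • X'' i) = c i • Q.mkQ (X i) := by
          intro i
          rw [map_smul]
          congr 1
          have : Q.mkQ (X'' i - X i) = 0 := (Submodule.Quotient.mk_eq_zero Q).2 (hX''1 i)
          rw [map_sub, sub_eq_zero] at this
          exact this
        rw [Finset.sum_congr rfl fun i _ => this i, hc, sub_self]
      exact hq
    · have heq : (((r : ℝ) • ∑ i, c i • X' i, (s : ℝ) • ∑ i, c i • X'' i) : L × L)
          = ∑ i, c i • (((r : ℝ) • X' i, (s : ℝ) • X'' i) : L × L) := by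
        refine Prod.ext ?_ ?_
        · show (r : ℝ) • ∑ i, c i • X' i = _
          rw [Prod.fst_sum, Finset.smul_sum]
          exact Finset.sum_congr rfl fun i _ => by
            rw [Prod.smul_fst]; exact smul_comm _ _ _
        · show (s : ℝ) • ∑ i, c i • X'' i = _
          rw [Prod.snd_sum, Finset.smul_sum]
          exact Finset.sum_congr rfl fun i _ => by
            rw [Prod.smul_snd]; exact smul_comm _ _ _
      rw [heq]
      exact Submodule.sum_mem h.toSubmodule fun i _ =>
        Submodule.smul_mem h.toSubmodule (c i) (hXh i)
  -- main induction
  have key : ∀ m : ℕ, ∀ Z ∈ LieModule.lowerCentralSeries ℝ L L m,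
      ∃ Z' Z'' : L,
        Z' - Z ∈ LieModule.lowerCentralSeries ℝ L L (m + 1) ∧
        Z'' - Z ∈ LieModule.lowerCentralSeries ℝ L L (m + 1) ∧
        (((r : ℝ) ^ (m + 1) • Z', (s : ℝ) ^ (m + 1) • Z'') : L × L) ∈ h := by
    intro m
    induction m with
    | zero =>
      intro Z _
      obtain ⟨Z', Z'', h1, h2, h3⟩ := base Z
      exact ⟨Z', Z'', h1, h2, by simpa using h3⟩
    | succ m ih =>
      intro Z hZ
      have hZ2 : Z ∈ ⁅(⊤ : LieIdeal ℝ L),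
          (LieModule.lowerCentralSeries ℝ L L m : LieSubmodule ℝ L L)⁆ := by
        rw [← LieModule.lowerCentralSeries_succ]; exact hZ
      have hZ' : Z ∈ Submodule.span ℝ
          {w | ∃ x ∈ (⊤ : LieIdeal ℝ L),
            ∃ n ∈ (LieModule.lowerCentralSeries ℝ L L m : LieSubmodule ℝ L L), ⁅x, n⁆ = w} := by
        rw [← LieSubmodule.lieIdeal_oper_eq_linear_span']
        exact (LieSubmodule.mem_toSubmodule _).2 hZ2
      refine Submodule.span_induction ?_ ?_ ?_ ?_ hZ'
      · rintro w ⟨x, -, n, hn, rfl⟩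
        obtain ⟨x', x'', hx1, hx2, hxh⟩ := base x
        obtain ⟨n', n'', hn1, hn2, hnh⟩ := ih n hn
        have hn'm : n' ∈ LieModule.lowerCentralSeries ℝ L L m := by
          have := add_mem hn (LieModule.antitone_lowerCentralSeries ℝ L L
            (Nat.le_succ m) hn1)
          simpa using this
        have hn''m : n'' ∈ LieModule.lowerCentralSeries ℝ L L m := by
          have := add_mem hn (LieModule.antitone_lowerCentralSeries ℝ L L
            (Nat.le_succ m) hn2)
          simpa using this
        refine ⟨⁅x', n'⁆, ⁅x'', n''⁆, ?_, ?_, ?_⟩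
        · have e : ⁅x', n'⁆ - ⁅x, n⁆ = ⁅x' - x, n'⁆ + ⁅x, n' - n⁆ := by
            rw [sub_lie, lie_sub]; abel
          rw [e]
          refine add_mem ?_ ?_
          · have := aux_lcs_lie_lcs 1 m (x' - x) n' hx1 hn'm
            simpa [show 1 + m + 1 = m + 1 + 1 by omega] using this
          · have : ⁅x, n' - n⁆ ∈ LieModule.lowerCentralSeries ℝ L L (m + 1 + 1) := by
              rw [LieModule.lowerCentralSeries_succ]
              exact LieSubmodule.lie_mem_lie (LieSubmodule.mem_top x) hn1
            exact this
        · have e : ⁅x'', n''⁆ - ⁅x, n⁆ = ⁅x'' - x, n''⁆ + ⁅x, n'' - n⁆ := by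
            rw [sub_lie, lie_sub]; abel
          rw [e]
          refine add_mem ?_ ?_
          · have := aux_lcs_lie_lcs 1 m (x'' - x) n'' hx2 hn''m
            simpa [show 1 + m + 1 = m + 1 + 1 by omega] using this
          · have : ⁅x, n'' - n⁆ ∈ LieModule.lowerCentralSeries ℝ L L (m + 1 + 1) := by
              rw [LieModule.lowerCentralSeries_succ]
              exact LieSubmodule.lie_mem_lie (LieSubmodule.mem_top x) hn2
            exact this
        · have hb := h.lie_mem hxh hnh
          have e : (⁅(((r : ℝ) • x', (s : ℝ) • x'') : L × L),
              (((r : ℝ) ^ (m + 1) • n', (s : ℝ) ^ (m + 1) • n'') : L × L)⁆ : L × L)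
              = (((r : ℝ) ^ (m + 1 + 1) • ⁅x', n'⁆, (s : ℝ) ^ (m + 1 + 1) • ⁅x'', n''⁆) :
                  L × L) := by
            refine Prod.ext ?_ ?_
            · show ⁅(r : ℝ) • x', (r : ℝ) ^ (m + 1) • n'⁆ = (r : ℝ) ^ (m + 1 + 1) • ⁅x', n'⁆
              rw [smul_lie, lie_smul, smul_smul, pow_succ]
              ring_nf
            · show ⁅(s : ℝ) • x'', (s : ℝ) ^ (m + 1) • n''⁆ = (s : ℝ) ^ (m + 1 + 1) • ⁅x'', n''⁆
              rw [smul_lie, lie_smul, smul_smul, pow_succ]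
              ring_nf
          rwa [e] at hb
      · exact ⟨0, 0, by simp, by simp, by rw [smul_zero, smul_zero]; exact h.zero_mem⟩
      · rintro y z - - ⟨y', y'', hy1, hy2, hy3⟩ ⟨z', z'', hz1, hz2, hz3⟩
        refine ⟨y' + z', y'' + z'', ?_, ?_, ?_⟩
        · have := add_mem hy1 hz1; simpa [add_sub_add_comm] using this
        · have := add_mem hy2 hz2; simpa [add_sub_add_comm] using this
        · rw [show ((r:ℝ)^(m+1+1) • (y'+z'), (s:ℝ)^(m+1+1) • (y''+z'')) =
              (((r:ℝ)^(m+1+1) • y', (s:ℝ)^(m+1+1) • y'') : L × L) +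
              (((r:ℝ)^(m+1+1) • z', (s:ℝ)^(m+1+1) • z'') : L × L) by
            rw [Prod.mk_add_mk, smul_add, smul_add]]
          exact h.add_mem hy3 hz3
      · rintro t y - ⟨y', y'', hy1, hy2, hy3⟩
        refine ⟨t • y', t • y'', ?_, ?_, ?_⟩
        · have := Submodule.smul_mem _ t hy1
          simpa [smul_sub] using this
        · have := Submodule.smul_mem _ t hy2
          simpa [smul_sub] using this
        · rw [show ((r:ℝ)^(m+1+1) • (t • y'), (s:ℝ)^(m+1+1) • (t • y'')) =
              t • (((r:ℝ)^(m+1+1) • y', (s:ℝ)^(m+1+1) • y'') : L × L) by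
            rw [Prod.smul_mk, smul_comm, smul_comm ((s:ℝ)^(m+1+1)) t]]
          exact h.smul_mem t hy3
  intro Z hZ
  obtain ⟨Z', Z'', h1, h2, h3⟩ := key (k - 1) Z hZ
  have hk1 : k - 1 + 1 = k := by omega
  rw [hk1] at h1 h2 h3
  rw [hnil] at h1 h2
  have e1 : Z' = Z := sub_eq_zero.mp ((LieSubmodule.mem_bot _).1 h1)
  have e2 : Z'' = Z := sub_eq_zero.mp ((LieSubmodule.mem_bot _).1 h2)
  rw [e1, e2] at h3
  exact h3
end
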